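/- Let X be a standard normal random variable with distribution function Φ and let S be a nonnegative random variable independent of X whose distribution function has upper endpoint 1 and which is not almost surely 0. Then for every ν > 1, lim_{u→∞} (1 − Φ(uν)) / P(SX > u) = 0. -/

import Mathlib

open MeasureTheory ProbabilityTheory Filter

noncomputable section

/-- The Gumbel distribution function `Λ(x) = exp(-exp(-x))`. -/
def gumbel (x : ℝ) : ℝ := Real.exp (-Real.exp (-x))

/-- Distribution function of a real random variable. -/
def df {Ω : Type*} [MeasurableSpace Ω] (μ : Measure Ω) (Y : Ω → ℝ) : ℝ → ℝ :=
  fun x => (μ {ω | Y ω ≤ x}).toReal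

/-- Survival function of a real random variable. -/
def surv {Ω : Type*} [MeasurableSpace Ω] (μ : Measure Ω) (Y : Ω → ℝ) (u : ℝ) : ℝ :=
  (μ {ω | u < Y ω}).toReal

/-- Generalised inverse `G⁻¹(p) = inf {x : G x ≥ p}`. -/
def genInv (G : ℝ → ℝ) (p : ℝ) : ℝ := sInf {x : ℝ | p ≤ G x}

/-- The standard normal distribution function `Φ`. -/
def stdNormalCDF (x : ℝ) : ℝ := ((gaussianReal 0 1) (Set.Iic x)).toReal

/-- The distribution of `S` has upper endpoint `1`. -/
def HasUpperEndpointOne {Ω : Type*} [MeasurableSpace Ω] (μ : Measure Ω) (S : Ω → ℝ) : Prop :=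
  (∀ᵐ ω ∂μ, S ω ≤ 1) ∧ ∀ s : ℝ, s < 1 → 0 < μ {ω | s < S ω}

/-- The survival function of `S` is regularly varying at `1` with index `γ`. -/
def RegVarAtOne {Ω : Type*} [MeasurableSpace Ω] (μ : Measure Ω) (S : Ω → ℝ) (γ : ℝ) : Prop :=
  ∀ t : ℝ, 0 < t →
    Tendsto (fun u : ℝ => surv μ S (1 - t / u) / surv μ S (1 - 1 / u)) atTop (nhds (t ^ γ))

/-- Assumption A of Hashorva and Weng, with explicit bounding variables `Sg` (index `γ`),
`St` (index `τ`) and threshold `ν ∈ (0,1)`. -/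
def AssumptionA {Ω : Type*} [MeasurableSpace Ω] (μ : Measure Ω)
    (S Sg St : Ω → ℝ) (γ τ ν : ℝ) : Prop :=
  0 ≤ γ ∧ 0 ≤ τ ∧ ν ∈ Set.Ioo (0:ℝ) 1 ∧
  (∀ᵐ ω ∂μ, 0 ≤ S ω) ∧ HasUpperEndpointOne μ S ∧
  (∀ᵐ ω ∂μ, 0 ≤ Sg ω) ∧ (∀ᵐ ω ∂μ, 0 ≤ St ω) ∧
  RegVarAtOne μ Sg γ ∧ RegVarAtOne μ St τ ∧
  ∀ u ∈ Set.Ioo ν (1:ℝ),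
    μ {ω | u < S ω} ≤ μ {ω | u < St ω} ∧ μ {ω | u < Sg ω} ≤ μ {ω | u < S ω}

/-- `X_n, n ≥ 1` is a standard stationary Gaussian sequence with correlation function
`ρ` (`ρ 0 = 1`, `ρ n = E[X_1 X_{n+1}]`): every finite linear combination of the `X_i`,
`i ≥ 1`, is a centered Gaussian with variance given by the covariances `ρ (|i - j|)`. -/
def IsStdStationaryGaussianSeq {Ω : Type*} [MeasurableSpace Ω] (μ : Measure Ω)
    (X : ℕ → Ω → ℝ) (ρ : ℕ → ℝ) : Prop :=
  (∀ i, Measurable (X i)) ∧ ρ 0 = 1 ∧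
  ∀ (m : ℕ) (c : Fin m → ℝ) (k : ℕ),
    Measure.map (fun ω => ∑ i : Fin m, c i * X (k + 1 + (i : ℕ)) ω) μ
      = gaussianReal 0
          (Real.toNNReal (∑ i : Fin m, ∑ j : Fin m,
            c i * c j * ρ (((i : ℕ) : ℤ) - ((j : ℕ) : ℤ)).natAbs))

/-- `M_n^* = max_{1 ≤ i ≤ n} S_i X_i` (junk value `0` for `n = 0`). -/
def Mstar {Ω : Type*} (S X : ℕ → Ω → ℝ) : ℕ → Ω → ℝ
  | 0 => fun _ => 0
  | 1 => fun ω => S 1 ω * X 1 ω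
  | (n + 2) => fun ω => max (Mstar S X (n + 1) ω) (S (n + 2) ω * X (n + 2) ω)

/-- `H ∈ GMDA(w)`: Gumbel max-domain of attraction with positive scaling function `w`. -/
def GMDA (H : ℝ → ℝ) (w : ℝ → ℝ) : Prop :=
  (∀ u, 0 < w u) ∧
  ∀ x : ℝ, 0 ≤ x →
    Tendsto (fun u : ℝ => (1 - H (u + x / w u)) / (1 - H u)) atTop (nhds (Real.exp (-x)))


open Real Set

noncomputable def psi (t : ℝ) : ℝ := (Real.sqrt (2 * π))⁻¹ * Real.exp (-(1/2) * t^2)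

lemma gaussianPDFReal_eq_psi : gaussianPDFReal 0 1 = psi := by
  funext t
  simp only [gaussianPDFReal, psi, NNReal.coe_one, mul_one, sub_zero]
  ring_nf

lemma psi_nonneg (t : ℝ) : 0 ≤ psi t :=
  mul_nonneg (inv_nonneg.2 (Real.sqrt_nonneg _)) (Real.exp_pos _).le

lemma psi_pos (t : ℝ) : 0 < psi t := by
  apply mul_pos (inv_pos.2 _) (Real.exp_pos _)
  exact Real.sqrt_pos.2 (by positivity)

lemma integrable_psi : Integrable psi := by
  have := (integrable_exp_neg_mul_sq (by norm_num : (0:ℝ) < 1/2)).const_mul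
    (Real.sqrt (2 * π))⁻¹
  exact this.congr (ae_of_all _ (fun t => by simp [psi]))

lemma integrable_mul_psi : Integrable (fun t => t * psi t) := by
  have := (integrable_mul_exp_neg_mul_sq (by norm_num : (0:ℝ) < 1/2)).const_mul
    (Real.sqrt (2 * π))⁻¹
  exact this.congr (ae_of_all _ (fun t => by simp [psi]; ring))

lemma integral_mul_psi (x : ℝ) : ∫ t in Ioi x, t * psi t = psi x := by
  have hderiv : ∀ t ∈ Ioi x, HasDerivAt (fun t => -psi t) (t * psi t) t := by
    intro t _
    have h1 : HasDerivAt (fun t : ℝ => -(1/2) * t^2) (-(1/2) * (2*t)) t := by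
      simpa using (hasDerivAt_pow 2 t).const_mul (-(1/2 : ℝ))
    have h2 := ((h1.exp).const_mul (Real.sqrt (2 * π))⁻¹).neg
    exact h2.congr_deriv (by simp only [psi]; ring)
  have hcont : ContinuousWithinAt (fun t => -psi t) (Ici x) x := by
    apply Continuous.continuousWithinAt
    have : Continuous psi := by
      apply Continuous.mul continuous_const
      exact (Real.continuous_exp.comp (by continuity))
    exact this.neg
  have htend : Tendsto (fun t => -psi t) atTop (nhds 0) := by
    have h : Tendsto (fun t : ℝ => -(1/2) * t^2) atTop atBot := by
      apply Tendsto.const_mul_atTop_of_neg (by norm_num : -(1/2 : ℝ) < 0)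
      exact tendsto_pow_atTop (by norm_num)
    have := ((Real.tendsto_exp_atBot.comp h).const_mul (Real.sqrt (2 * π))⁻¹).neg
    simpa [psi, Function.comp] using this
  have := integral_Ioi_of_hasDerivAt_of_tendsto hcont hderiv
    integrable_mul_psi.integrableOn htend
  simpa using this

lemma tail_le (x : ℝ) (hx : 0 < x) : ∫ t in Ioi x, psi t ≤ psi x / x := by
  have h1 : ∫ t in Ioi x, psi t ≤ ∫ t in Ioi x, x⁻¹ * (t * psi t) := by
    apply setIntegral_mono_on integrable_psi.integrableOn
      (integrable_mul_psi.integrableOn.const_mul _) measurableSet_Ioi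
    intro t ht
    rw [← mul_assoc]
    nth_rewrite 1 [← one_mul (psi t)]
    apply mul_le_mul_of_nonneg_right _ (psi_nonneg t)
    rw [← inv_mul_cancel₀ hx.ne']
    exact mul_le_mul_of_nonneg_left (le_of_lt ht) (inv_nonneg.2 hx.le)
  rw [integral_const_mul, integral_mul_psi] at h1
  rwa [div_eq_inv_mul]

lemma tail_ge (x : ℝ) (hx : 0 ≤ x) : psi (x+1) ≤ ∫ t in Ioi x, psi t := by
  have h1 : ∫ t in Ioc x (x+1), psi t ≤ ∫ t in Ioi x, psi t :=
    setIntegral_mono_set integrable_psi.integrableOn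
      (ae_of_all _ psi_nonneg) (HasSubset.Subset.eventuallyLE Ioc_subset_Ioi_self)
  have h2 : ∫ t in Ioc x (x+1), (psi (x+1)) ≤ ∫ t in Ioc x (x+1), psi t := by
    apply setIntegral_mono_on (integrableOn_const (μ := volume) (s := Ioc x (x+1)) (C := psi (x+1)) (by simp))
      integrable_psi.integrableOn measurableSet_Ioc
    intro t ht
    apply mul_le_mul_of_nonneg_left _ (inv_nonneg.2 (Real.sqrt_nonneg _))
    apply Real.exp_le_exp.2
    have h0t : 0 ≤ t := hx.trans ht.1.le
    nlinarith [ht.2, ht.1, sq_nonneg (x+1-t)]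
  have h3 : ∫ t in Ioc x (x+1), (psi (x+1)) = psi (x+1) := by
    rw [setIntegral_const]; simp
  linarith

lemma tail_toReal (x : ℝ) : ((gaussianReal 0 1) (Set.Ioi x)).toReal = ∫ t in Set.Ioi x, psi t := by
  rw [gaussianReal_apply_eq_integral 0 one_ne_zero, gaussianPDFReal_eq_psi,
    ENNReal.toReal_ofReal (setIntegral_nonneg measurableSet_Ioi (fun t _ => psi_nonneg t))]

lemma one_sub_stdNormalCDF (x : ℝ) :
    1 - stdNormalCDF x = ((gaussianReal 0 1) (Set.Ioi x)).toReal := by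
  have h := measure_compl (μ := gaussianReal 0 1) (measurableSet_Iic (a := x)) (measure_ne_top _ _)
  rw [Set.compl_Iic] at h
  rw [stdNormalCDF, h, measure_univ, ENNReal.toReal_sub_of_le prob_le_one ENNReal.one_ne_top,
    ENNReal.toReal_one]

/-- the Gaussian tail at `uν` is negligible compared with the tail of `SX`. -/
theorem gaussian_tail_negligible
    {Ω : Type*} [MeasurableSpace Ω] (μ : Measure Ω) [IsProbabilityMeasure μ]
    (X S : Ω → ℝ)
    (hXmeas : Measurable X) (hSmeas : Measurable S)
    (hXgauss : Measure.map X μ = gaussianReal 0 1)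
    (hSXindep : IndepFun S X μ)
    (hSnonneg : ∀ᵐ ω ∂μ, 0 ≤ S ω)
    (hupper : HasUpperEndpointOne μ S)
    (hSne0 : ¬ (∀ᵐ ω ∂μ, S ω = 0)) :
    ∀ ν : ℝ, 1 < ν →
      Tendsto (fun u : ℝ =>
          (1 - stdNormalCDF (u * ν)) / (μ {ω | u < S ω * X ω}).toReal)
        atTop (nhds 0) := by
  intro ν hν
  have hν0 : (0:ℝ) < ν := lt_trans one_pos hν
  have hνinv1 : ν⁻¹ < 1 := by rw [inv_lt_one_iff₀]; right; exact hν
  have hνinv0 : 0 < ν⁻¹ := inv_pos.2 hν0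
  set c : ℝ := (1 + ν⁻¹)/2 with hc_def
  have hc0 : 0 < c := by positivity
  have hc1 : c < 1 := by rw [hc_def]; linarith
  have hcν : ν⁻¹ < c := by rw [hc_def]; linarith
  set b : ℝ := c⁻¹ with hb_def
  have hb0 : 0 < b := inv_pos.2 hc0
  have hcb : c * b = 1 := mul_inv_cancel₀ hc0.ne'
  have hb1 : 1 < b := by nlinarith
  have h1νc : 1 < ν * c := by
    rw [← mul_inv_cancel₀ hν0.ne']
    exact mul_lt_mul_of_pos_left hcν hν0
  have hbν : b < ν := by nlinarith
  set p : ℝ := (μ {ω | c < S ω}).toReal with hp_def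
  have hp : 0 < p := ENNReal.toReal_pos (hupper.2 c hc1).ne' (measure_ne_top μ _)
  have hden : ∀ u : ℝ, 0 < u →
      p * ((gaussianReal 0 1) (Set.Ioi (u*b))).toReal ≤ (μ {ω | u < S ω * X ω}).toReal := by
    intro u hu
    have hsub : (S ⁻¹' Set.Ioi c) ∩ (X ⁻¹' Set.Ioi (u*b)) ⊆ {ω | u < S ω * X ω} := by
      rintro ω ⟨h1, h2⟩
      simp only [Set.mem_preimage, Set.mem_Ioi] at h1 h2
      have hub : 0 < u * b := mul_pos hu hb0
      have hX : 0 < X ω := lt_trans hub h2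
      show u < S ω * X ω
      calc u = c * (u * b) := by
              rw [mul_comm u b, ← mul_assoc, hcb, one_mul]
        _ < c * X ω := mul_lt_mul_of_pos_left h2 hc0
        _ < S ω * X ω := mul_lt_mul_of_pos_right h1 hX
    have hmeas := hSXindep.measure_inter_preimage_eq_mul
      (s := Set.Ioi c) (t := Set.Ioi (u*b)) measurableSet_Ioi measurableSet_Ioi
    have hX' : μ (X ⁻¹' Set.Ioi (u*b)) = gaussianReal 0 1 (Set.Ioi (u*b)) := by
      rw [← hXgauss, Measure.map_apply hXmeas measurableSet_Ioi]
    have hmono := measure_mono (μ := μ) hsub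
    rw [hmeas, hX'] at hmono
    have h := ENNReal.toReal_mono (measure_ne_top μ _) hmono
    rw [ENNReal.toReal_mul] at h
    exact h
  have hg : Tendsto (fun u : ℝ => p⁻¹ * Real.exp (((u*b+1)^2 - (u*ν)^2)/2))
      atTop (nhds 0) := by
    have hneg : (b^2 - ν^2)/2 < 0 := by nlinarith
    have hlin : Tendsto (fun u : ℝ => (b^2-ν^2)/2 * u + b) atTop atBot :=
      tendsto_atBot_add_const_right _ b (Tendsto.const_mul_atTop_of_neg hneg tendsto_id)
    have hq : Tendsto (fun u : ℝ => u * ((b^2-ν^2)/2 * u + b) + 1/2) atTop atBot :=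
      tendsto_atBot_add_const_right _ (1/2) (Tendsto.atTop_mul_atBot₀ tendsto_id hlin)
    have h := (Real.tendsto_exp_atBot.comp hq).const_mul p⁻¹
    rw [mul_zero] at h
    refine Tendsto.congr (fun u => ?_) h
    simp only [Function.comp]
    congr 1
    congr 1
    ring
  apply tendsto_of_tendsto_of_tendsto_of_le_of_le' tendsto_const_nhds hg
  · filter_upwards [eventually_ge_atTop (1:ℝ)] with u _
    refine div_nonneg ?_ ENNReal.toReal_nonneg
    rw [one_sub_stdNormalCDF, tail_toReal]
    exact setIntegral_nonneg measurableSet_Ioi fun t _ => psi_nonneg t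
  · filter_upwards [eventually_ge_atTop (1:ℝ)] with u hu
    have hu0 : (0:ℝ) < u := lt_of_lt_of_le one_pos hu
    have huν : 1 ≤ u * ν := by nlinarith
    have huν0 : 0 < u * ν := lt_of_lt_of_le zero_lt_one huν
    have hub0 : 0 ≤ u * b := (mul_pos hu0 hb0).le
    rw [one_sub_stdNormalCDF, tail_toReal]
    have hNum : ∫ t in Set.Ioi (u*ν), psi t ≤ psi (u*ν) :=
      (tail_le _ huν0).trans (div_le_self (psi_nonneg _) huν)
    have hDen : p * psi (u*b+1) ≤ (μ {ω | u < S ω * X ω}).toReal := by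
      refine le_trans ?_ (hden u hu0)
      rw [tail_toReal]
      exact mul_le_mul_of_nonneg_left (tail_ge _ hub0) hp.le
    have hDpos : 0 < p * psi (u*b+1) := mul_pos hp (psi_pos _)
    have h1 : (∫ t in Set.Ioi (u*ν), psi t) / (μ {ω | u < S ω * X ω}).toReal
        ≤ psi (u*ν) / (p * psi (u*b+1)) :=
      div_le_div₀ (psi_nonneg _) hNum hDpos hDen
    refine h1.trans (le_of_eq ?_)
    have hs : Real.sqrt (2*π) ≠ 0 := ne_of_gt (Real.sqrt_pos.2 (by positivity))
    have hexp : Real.exp (-(1/2)*(u*ν)^2)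
        = Real.exp (((u*b+1)^2-(u*ν)^2)/2) * Real.exp (-(1/2)*(u*b+1)^2) := by
      rw [← Real.exp_add]; congr 1; ring
    simp only [psi]
    rw [hexp]
    field_simp
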